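/- Let I be an ideal of R = MvPolynomial (Fin n) (ZMod 2) containing the field ideal ⟨x_i^2 + x_i : i⟩, and let V(I) = {v ∈ (Fin n → ZMod 2) : f(v) = 0 for all f ∈ I}. Then I = {f ∈ R : f(v) = 0 for all v ∈ V(I)}; consequently, ideals of R containing the field ideal are in one-to-one correspondence with subsets of Fin n → ZMod 2. -/

import Mathlib

open MvPolynomial

/-- A Boolean (multilinear) polynomial: every variable occurs with exponent ≤ 1
in every monomial of the support. -/
def IsBooleanPoly {n : ℕ} (f : MvPolynomial (Fin n) (ZMod 2)) : Prop :=
  ∀ m ∈ f.support, ∀ i, m i ≤ 1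

/-- The field ideal ⟨x_i² + x_i : i⟩. -/
noncomputable def fieldIdeal (n : ℕ) : Ideal (MvPolynomial (Fin n) (ZMod 2)) :=
  Ideal.span (Set.range fun i : Fin n => X i ^ 2 + X i)

/-- The vanishing ideal of a set of points. -/
noncomputable def pointsVanishingIdeal {n : ℕ} (P : Set (Fin n → ZMod 2)) :
    Ideal (MvPolynomial (Fin n) (ZMod 2)) where
  carrier := {f | ∀ p ∈ P, eval p f = 0}
  add_mem' := by
    intro a b ha hb p hp
    simp [ha p hp, hb p hp]
  zero_mem' := by
    intro p hp
    simp
  smul_mem' := by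
    intro c a ha p hp
    simp [smul_eq_mul, ha p hp]

/-- Strict extended lex order on Boolean polynomials: `p < q` iff the lex-largest
exponent vector in the symmetric difference of the supports belongs to the support of `q`. -/
def ExtLexLt {n : ℕ} (p q : MvPolynomial (Fin n) (ZMod 2)) : Prop :=
  ∃ m ∈ q.support \ p.support, ∀ m' ∈ (symmDiff p.support q.support), toLex m' ≤ toLex m

def ExtLexLe {n : ℕ} (p q : MvPolynomial (Fin n) (ZMod 2)) : Prop :=
  p = q ∨ ExtLexLt p q

/-- `t` is the leading monomial of `f` with respect to the monomial order `m`. -/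
def IsLeadingMonomial {n : ℕ} (m : MonomialOrder (Fin n))
    (f : MvPolynomial (Fin n) (ZMod 2)) (t : Fin n →₀ ℕ) : Prop :=
  t ∈ f.support ∧ ∀ t' ∈ f.support, m.toSyn t' ≤ m.toSyn t

/-- `t` is a standard monomial of the ideal `I` w.r.t. the monomial order `m`:
it is not the leading monomial of any (necessarily nonzero) element of `I`. -/
def IsStdMonomial {n : ℕ} (m : MonomialOrder (Fin n))
    (I : Ideal (MvPolynomial (Fin n) (ZMod 2))) (t : Fin n →₀ ℕ) : Prop :=
  ¬ ∃ f ∈ I, IsLeadingMonomial m f t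



section Aux

lemma zmod2_pow {a : ZMod 2} {k : ℕ} (hk : k ≠ 0) : a ^ k = a := by
  have h2 : a ^ 2 = a := by revert a; decide
  induction k with
  | zero => omega
  | succ k ih =>
    rcases Nat.eq_zero_or_pos k with h | h
    · simp [h]
    · rw [pow_succ, ih (by omega), ← pow_two, h2]

lemma zmod2_ne_zero {a : ZMod 2} (h : a ≠ 0) : a = 1 := by revert h; revert a; decide

/-- The indicator polynomial of a point. -/
noncomputable def deltaPoly {n : ℕ} (v : Fin n → ZMod 2) : MvPolynomial (Fin n) (ZMod 2) :=
  ∏ i, (X i + C (v i) + 1)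

lemma eval_deltaPoly {n : ℕ} (v p : Fin n → ZMod 2) :
    eval p (deltaPoly v) = if p = v then 1 else 0 := by
  have key : ∀ a b : ZMod 2, a + b + 1 = if a = b then 1 else 0 := by decide
  simp only [deltaPoly, eval_prod, map_add, eval_X, eval_C, map_one]
  by_cases h : p = v
  · subst h
    simp [key]
  · obtain ⟨i, hi⟩ := Function.ne_iff.mp h
    rw [if_neg h]
    apply Finset.prod_eq_zero (Finset.mem_univ i)
    rw [key]
    simp [hi]

lemma mvpoly2_add_self_zero {n : ℕ} (x : MvPolynomial (Fin n) (ZMod 2)) : x + x = 0 := by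
  have h : ((1 : ZMod 2) + 1) • x = x + x := by rw [add_smul, one_smul]
  rw [← h, show (1 : ZMod 2) + 1 = 0 by decide, zero_smul]

lemma mvpoly2_neg_eq_self {n : ℕ} (x : MvPolynomial (Fin n) (ZMod 2)) : -x = x :=
  neg_eq_of_add_eq_zero_left (mvpoly2_add_self_zero x)

lemma mk_X_sq {n : ℕ} (i : Fin n) :
    Ideal.Quotient.mk (fieldIdeal n) (X i ^ 2) = Ideal.Quotient.mk (fieldIdeal n) (X i) := by
  rw [Ideal.Quotient.eq, sub_eq_add_neg, mvpoly2_neg_eq_self (X i)]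
  exact Ideal.subset_span ⟨i, rfl⟩

lemma mk_X_pow {n : ℕ} (i : Fin n) {k : ℕ} (hk : k ≠ 0) :
    Ideal.Quotient.mk (fieldIdeal n) (X i ^ k) = Ideal.Quotient.mk (fieldIdeal n) (X i) := by
  induction k with
  | zero => omega
  | succ k ih =>
    rcases Nat.eq_zero_or_pos k with h | h
    · simp [h]
    · rw [pow_succ, map_mul, ih (by omega), ← map_mul, ← pow_two, mk_X_sq]

lemma mk_monomial {n : ℕ} (m : Fin n →₀ ℕ) :
    Ideal.Quotient.mk (fieldIdeal n) (monomial m (1 : ZMod 2)) =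
      Ideal.Quotient.mk (fieldIdeal n) (∏ i ∈ m.support, X i) := by
  rw [monomial_eq, map_one, one_mul, Finsupp.prod, map_prod, map_prod]
  exact Finset.prod_congr rfl fun i hi => mk_X_pow i (Finsupp.mem_support_iff.mp hi)

lemma sum_powerset_zero {n : ℕ} (c : Finset (Fin n) → ZMod 2)
    (h : ∀ S : Finset (Fin n), ∑ T ∈ S.powerset, c T = 0) : ∀ T, c T = 0 := by
  intro T
  induction T using Finset.strongInduction with
  | _ T ih =>
    have hT := h T
    rw [← Finset.add_sum_erase _ _ (Finset.mem_powerset_self T)] at hT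
    rw [Finset.sum_eq_zero, add_zero] at hT
    · exact hT
    · intro T' hT'
      rw [Finset.mem_erase, Finset.mem_powerset] at hT'
      exact ih T' (lt_of_le_of_ne hT'.2 hT'.1)

lemma eval_prodX {n : ℕ} (S T : Finset (Fin n)) :
    eval (fun i => if i ∈ S then (1:ZMod 2) else 0) (∏ i ∈ T, X i) = if T ⊆ S then 1 else 0 := by
  rw [eval_prod]
  simp only [eval_X]
  by_cases h : T ⊆ S
  · rw [if_pos h, Finset.prod_eq_one]
    intro i hi; rw [if_pos (h hi)]
  · rw [if_neg h]
    obtain ⟨i, hiT, hiS⟩ := Finset.not_subset.mp h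
    exact Finset.prod_eq_zero hiT (if_neg hiS)

/-- A polynomial vanishing at every point of `(ZMod 2)ⁿ` lies in the field ideal. -/
lemma mem_fieldIdeal_of_eval_zero {n : ℕ} {f : MvPolynomial (Fin n) (ZMod 2)}
    (hf : ∀ v, eval v f = 0) : f ∈ fieldIdeal n := by
  classical
  set π := Ideal.Quotient.mk (fieldIdeal n) with hπdef
  set g : MvPolynomial (Fin n) (ZMod 2) :=
    ∑ m ∈ f.support, C (coeff m f) * ∏ i ∈ m.support, X i with hg
  have hπ : π f = π g := by
    conv_lhs => rw [f.as_sum]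
    rw [map_sum, map_sum]
    refine Finset.sum_congr rfl fun m hm => ?_
    rw [show monomial m (coeff m f) = C (coeff m f) * monomial m 1 by
          rw [C_mul_monomial, mul_one],
        map_mul, map_mul, mk_monomial]
  have heq : ∀ v, eval v g = eval v f := by
    intro v
    conv_rhs => rw [f.as_sum]
    rw [hg, map_sum, map_sum]
    refine Finset.sum_congr rfl fun m hm => ?_
    rw [eval_monomial, map_mul, eval_C, eval_prod]
    simp only [eval_X]
    congr 1
    rw [Finsupp.prod]
    exact Finset.prod_congr rfl fun i hi =>
      (zmod2_pow (Finsupp.mem_support_iff.mp hi)).symm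
  set c : Finset (Fin n) → ZMod 2 :=
    fun T => ∑ m ∈ f.support.filter (fun m => m.support = T), coeff m f with hc
  have hgroup : g = ∑ T : Finset (Fin n), C (c T) * ∏ i ∈ T, X i := by
    rw [hg, ← Finset.sum_fiberwise_of_maps_to
      (fun m _ => Finset.mem_univ m.support)
      (fun m => C (coeff m f) * ∏ i ∈ m.support, X i)]
    refine Finset.sum_congr rfl fun T _ => ?_
    rw [hc, map_sum, Finset.sum_mul]
    refine Finset.sum_congr rfl fun m hm => ?_
    rw [(Finset.mem_filter.mp hm).2]
  have hcz : ∀ T, c T = 0 := by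
    apply sum_powerset_zero
    intro S
    have h0 : eval (fun i => if i ∈ S then (1:ZMod 2) else 0) g = 0 := by
      rw [heq]; exact hf _
    rw [hgroup, map_sum] at h0
    simp only [map_mul, eval_C, eval_prodX, mul_ite, mul_one, mul_zero] at h0
    rw [← Finset.sum_filter] at h0
    rw [show S.powerset = Finset.univ.filter (fun T => T ⊆ S) by
      ext T; simp [Finset.mem_powerset]]
    exact h0
  have hg0 : g = 0 := by
    rw [hgroup]
    apply Finset.sum_eq_zero
    intro T _
    rw [hcz T, map_zero, zero_mul]
  rw [← Ideal.Quotient.eq_zero_iff_mem, hπdef] at *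
  rw [hπ, hg0, map_zero]

lemma fieldIdeal_le_vanishing {n : ℕ} (P : Set (Fin n → ZMod 2)) :
    fieldIdeal n ≤ pointsVanishingIdeal P := by
  rw [fieldIdeal, Ideal.span_le]
  rintro _ ⟨i, rfl⟩ p _
  have h2 : ∀ a : ZMod 2, a ^ 2 + a = 0 := by decide
  simp only [map_add, map_pow, eval_X]
  exact h2 (p i)

lemma ideal_eq_vanishing_variety_key {n : ℕ}
    (I : Ideal (MvPolynomial (Fin n) (ZMod 2))) (hI : fieldIdeal n ≤ I) :
    I = pointsVanishingIdeal {v : Fin n → ZMod 2 | ∀ f ∈ I, eval v f = 0} := by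
  classical
  apply le_antisymm
  · intro f hf v hv
    exact hv f hf
  · intro f hf
    simp only [pointsVanishingIdeal, Submodule.mem_mk, AddSubmonoid.mem_mk,
      AddSubsemigroup.mem_mk, Set.mem_setOf_eq] at hf
    have key : ∀ v : Fin n → ZMod 2, ∃ g, g ∈ I ∧ (eval v f ≠ 0 → eval v g = 1) := by
      intro v
      by_cases hv : eval v f = 0
      · exact ⟨0, I.zero_mem, fun h => absurd hv h⟩
      · have hnv : ¬ (∀ g ∈ I, eval v g = 0) := fun hvV => hv (hf v hvV)
        push_neg at hnv
        obtain ⟨g, hgI, hgv⟩ := hnv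
        exact ⟨g, hgI, fun _ => zmod2_ne_zero hgv⟩
    choose g hgI hgv using key
    set W : Finset (Fin n → ZMod 2) := Finset.univ.filter (fun v => eval v f ≠ 0) with hW
    set h : MvPolynomial (Fin n) (ZMod 2) := ∑ v ∈ W, deltaPoly v * g v with hh
    have hhI : h ∈ I := Ideal.sum_mem I fun v hv => I.mul_mem_left _ (hgI v)
    have heval : ∀ p, eval p (f - h) = 0 := by
      intro p
      have hevh : eval p h = if p ∈ W then 1 else 0 := by
        rw [hh, map_sum]
        have hterm : ∀ v ∈ W, eval p (deltaPoly v * g v) =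
            if p = v then eval p (g p) else 0 := by
          intro v _
          rw [map_mul, eval_deltaPoly]
          by_cases hpv : p = v
          · subst hpv; simp
          · simp [hpv]
        rw [Finset.sum_congr rfl hterm, Finset.sum_ite_eq W p (fun _ => eval p (g p))]
        by_cases hp : p ∈ W
        · rw [if_pos hp, if_pos hp, hgv p (Finset.mem_filter.mp hp).2]
        · rw [if_neg hp, if_neg hp]
      rw [map_sub, hevh]
      by_cases hp : p ∈ W
      · rw [if_pos hp, zmod2_ne_zero (Finset.mem_filter.mp hp).2, sub_self]
      · rw [if_neg hp]
        have hz : eval p f = 0 := by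
          by_contra hc
          exact hp (Finset.mem_filter.mpr ⟨Finset.mem_univ p, hc⟩)
        rw [hz, sub_zero]
    have hsub : f - h ∈ I := hI (mem_fieldIdeal_of_eval_zero heval)
    have hfI := I.add_mem hsub hhI
    rwa [sub_add_cancel] at hfI

end Aux

/-- An ideal containing the field ideal equals the vanishing ideal of its variety;
consequently such ideals correspond bijectively to subsets of the affine space. -/
theorem ideal_eq_pointsVanishingIdeal_variety (n : ℕ)
    (I : Ideal (MvPolynomial (Fin n) (ZMod 2))) (hI : fieldIdeal n ≤ I) :
    I = pointsVanishingIdeal {v : Fin n → ZMod 2 | ∀ f ∈ I, eval v f = 0} ∧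
    Function.Bijective
      (fun J : {J : Ideal (MvPolynomial (Fin n) (ZMod 2)) // fieldIdeal n ≤ J} =>
        ({v : Fin n → ZMod 2 | ∀ f ∈ J.1, eval v f = 0} :
          Set (Fin n → ZMod 2))) := by
  refine ⟨ideal_eq_vanishing_variety_key I hI, ?_, ?_⟩
  · rintro ⟨J₁, hJ₁⟩ ⟨J₂, hJ₂⟩ hJ
    simp only at hJ
    ext1
    show J₁ = J₂
    rw [ideal_eq_vanishing_variety_key J₁ hJ₁, ideal_eq_vanishing_variety_key J₂ hJ₂, hJ]
  · intro P
    refine ⟨⟨pointsVanishingIdeal P, fieldIdeal_le_vanishing P⟩, ?_⟩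
    simp only
    ext v
    simp only [Set.mem_setOf_eq]
    constructor
    · intro hv
      by_contra hvP
      have hd : deltaPoly v ∈ pointsVanishingIdeal P := by
        intro p hp
        rw [eval_deltaPoly, if_neg]
        rintro rfl
        exact hvP hp
      have h1 := hv _ hd
      rw [eval_deltaPoly, if_pos rfl] at h1
      exact one_ne_zero h1
    · intro hv f hf
      exact hf v hv
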